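/- (Projection step with a smooth function.) Let C ⊆ ℝⁿ be a nonempty closed convex set, let φ : ℝⁿ → ℝ be differentiable with gradient that is L'-Lipschitz with respect to the Euclidean norm, let η > 0, and let x, u ∈ ℝⁿ. Let y = Π_C[x − ηu] be the Euclidean projection of x − ηu onto C. Then for every z ∈ C: φ(y) ≤ φ(z) + ⟨y − z, ∇φ(x) − u⟩ + (L'/2 − 1/(2η))‖y − x‖² + (L'/2 + 1/(2η))‖z − x‖² − (1/(2η))‖y − z‖². -/

import Mathlib

open scoped RealInnerProductSpace

/-- Descent-type bound for a function with Lipschitz gradient. -/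
lemma descent_bound {n : ℕ} (φ : EuclideanSpace ℝ (Fin n) → ℝ)
    (φ' : EuclideanSpace ℝ (Fin n) → EuclideanSpace ℝ (Fin n))
    (hdiff : ∀ w, HasGradientAt φ (φ' w) w)
    (L' : ℝ) (hLip : ∀ w₁ w₂ : EuclideanSpace ℝ (Fin n), ‖φ' w₁ - φ' w₂‖ ≤ L' * ‖w₁ - w₂‖)
    (a b : EuclideanSpace ℝ (Fin n)) :
    |φ b - φ a - ⟪φ' a, b - a⟫| ≤ L' / 2 * ‖b - a‖ ^ 2 := by
  set d := b - a with hd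
  have hline : ∀ t : ℝ, HasDerivAt (fun s : ℝ => a + s • d) d t := fun t => by
    simpa using ((hasDerivAt_id t).smul_const d).const_add a
  have hg : ∀ t : ℝ, HasDerivAt (fun s : ℝ => φ (a + s • d)) ⟪φ' (a + t • d), d⟫ t := by
    intro t
    have h1 := (hdiff (a + t • d)).hasFDerivAt.comp_hasDerivAt t (hline t)
    simp [InnerProductSpace.toDual_apply_apply] at h1; rw [Function.comp_def] at h1; convert h1 using 1
  have hcont : Continuous φ' := by
    have hL : LipschitzWith (Real.toNNReal L') φ' := by
      apply LipschitzWith.of_dist_le_mul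
      intro w₁ w₂
      rw [dist_eq_norm, dist_eq_norm]
      exact (hLip w₁ w₂).trans
        (mul_le_mul_of_nonneg_right (Real.le_coe_toNNReal L') (norm_nonneg _))
    exact hL.continuous
  have hcint : Continuous fun t : ℝ => ⟪φ' (a + t • d), d⟫ :=
    Continuous.inner (hcont.comp (continuous_const.add (continuous_id.smul continuous_const))) continuous_const
  have hFTC : φ b - φ a = ∫ t in (0:ℝ)..1, ⟪φ' (a + t • d), d⟫ := by
    have h := intervalIntegral.integral_eq_sub_of_hasDerivAt
      (f := fun s : ℝ => φ (a + s • d)) (fun t _ => hg t) (hcint.intervalIntegrable 0 1)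
    rw [h]
    simp [hd]
  have hcint2 : Continuous fun t : ℝ => ⟪φ' (a + t • d) - φ' a, d⟫ :=
    Continuous.inner ((hcont.comp (continuous_const.add (continuous_id.smul continuous_const))).sub continuous_const) continuous_const
  have hdiffint : φ b - φ a - ⟪φ' a, d⟫
      = ∫ t in (0:ℝ)..1, ⟪φ' (a + t • d) - φ' a, d⟫ := by
    have hsub : ∀ t : ℝ, ⟪φ' (a + t • d) - φ' a, d⟫
        = ⟪φ' (a + t • d), d⟫ - ⟪φ' a, d⟫ := fun t => by
      rw [inner_sub_left]
    have hconst : (∫ _ in (0:ℝ)..1, (⟪φ' a, d⟫ : ℝ)) = ⟪φ' a, d⟫ := by simp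
    rw [hFTC, ← hconst, ← intervalIntegral.integral_sub (hcint.intervalIntegrable 0 1)
      intervalIntegrable_const]
    exact intervalIntegral.integral_congr fun t _ => (hsub t).symm
  rw [hdiffint]
  have habs1 : |∫ t in (0:ℝ)..1, ⟪φ' (a + t • d) - φ' a, d⟫|
      ≤ ∫ t in (0:ℝ)..1, |⟪φ' (a + t • d) - φ' a, d⟫| :=
    intervalIntegral.abs_integral_le_integral_abs (by norm_num)
  have habs2 : (∫ t in (0:ℝ)..1, |⟪φ' (a + t • d) - φ' a, d⟫|)
      ≤ ∫ t in (0:ℝ)..1, L' * ‖d‖ ^ 2 * t := by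
    apply intervalIntegral.integral_mono_on (by norm_num)
    · exact (hcint2.abs).intervalIntegrable 0 1
    · exact ((continuous_const.mul continuous_id) : Continuous fun t : ℝ => L' * ‖d‖ ^ 2 * t).intervalIntegrable 0 1
    · intro t ht
      have h1 : |⟪φ' (a + t • d) - φ' a, d⟫| ≤ ‖φ' (a + t • d) - φ' a‖ * ‖d‖ :=
        abs_real_inner_le_norm _ _
      have h2 : ‖φ' (a + t • d) - φ' a‖ ≤ L' * ‖(a + t • d) - a‖ := hLip _ _
      have h3 : ‖(a + t • d) - a‖ = t * ‖d‖ := by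
        have : (a + t • d) - a = t • d := by abel
        rw [this, norm_smul, Real.norm_eq_abs, abs_of_nonneg ht.1]
      calc |⟪φ' (a + t • d) - φ' a, d⟫| ≤ ‖φ' (a + t • d) - φ' a‖ * ‖d‖ := h1
        _ ≤ (L' * (t * ‖d‖)) * ‖d‖ := by
            rw [← h3]; exact mul_le_mul_of_nonneg_right h2 (norm_nonneg _)
        _ = L' * ‖d‖ ^ 2 * t := by ring
  have hval : (∫ t in (0:ℝ)..1, L' * ‖d‖ ^ 2 * t) = L' / 2 * ‖d‖ ^ 2 := by
    rw [intervalIntegral.integral_const_mul, integral_id]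
    ring
  calc |∫ t in (0:ℝ)..1, ⟪φ' (a + t • d) - φ' a, d⟫|
      ≤ ∫ t in (0:ℝ)..1, |⟪φ' (a + t • d) - φ' a, d⟫| := habs1
    _ ≤ ∫ t in (0:ℝ)..1, L' * ‖d‖ ^ 2 * t := habs2
    _ = L' / 2 * ‖d‖ ^ 2 := hval

/-- Projection step with a smooth function (Lemma 5):
if `y = Π_C[x − ηu]`, then for every `z ∈ C`,
`φ(y) ≤ φ(z) + ⟨y − z, ∇φ(x) − u⟩ + (L'/2 − 1/(2η))‖y − x‖² + (L'/2 + 1/(2η))‖z − x‖²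
  − (1/(2η))‖y − z‖²`. -/
theorem projection_step_smooth
    {n : ℕ} (C : Set (EuclideanSpace ℝ (Fin n)))
    (hCne : C.Nonempty) (hCclosed : IsClosed C) (hCconv : Convex ℝ C)
    (φ : EuclideanSpace ℝ (Fin n) → ℝ)
    (φ' : EuclideanSpace ℝ (Fin n) → EuclideanSpace ℝ (Fin n))
    (hdiff : ∀ w, HasGradientAt φ (φ' w) w)
    (L' : ℝ) (hLip : ∀ w₁ w₂ : EuclideanSpace ℝ (Fin n), ‖φ' w₁ - φ' w₂‖ ≤ L' * ‖w₁ - w₂‖)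
    (η : ℝ) (hη : 0 < η)
    (x u y : EuclideanSpace ℝ (Fin n))
    (hyC : y ∈ C)
    (hproj : ∀ z ∈ C, ‖y - (x - η • u)‖ ≤ ‖z - (x - η • u)‖) :
    ∀ z ∈ C,
      φ y ≤ φ z + ⟪y - z, φ' x - u⟫
        + (L' / 2 - 1 / (2 * η)) * ‖y - x‖ ^ 2
        + (L' / 2 + 1 / (2 * η)) * ‖z - x‖ ^ 2
        - (1 / (2 * η)) * ‖y - z‖ ^ 2 := by
  intro z hzC
  haveI : Nonempty C := hCne.to_subtype
  set p : EuclideanSpace ℝ (Fin n) := x - η • u with hp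
  -- projection characterization
  have hinf : ‖p - y‖ = ⨅ w : C, ‖p - w‖ := by
    apply le_antisymm
    · apply le_ciInf
      intro w
      rw [norm_sub_rev, norm_sub_rev p (w : EuclideanSpace ℝ (Fin n))]
      exact hproj w w.2
    · have hbdd : BddBelow (Set.range fun w : C => ‖p - (w : EuclideanSpace ℝ (Fin n))‖) := by
        refine ⟨0, ?_⟩
        rintro r ⟨w, rfl⟩
        exact norm_nonneg _
      exact ciInf_le hbdd (⟨y, hyC⟩ : C)
  have hchar : ∀ w ∈ C, ⟪p - y, w - y⟫ ≤ 0 :=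
    (norm_eq_iInf_iff_real_inner_le_zero hCconv hyC).mp hinf
  have h0 := hchar z hzC
  -- scalar form of projection inequality
  have hPs : ⟪y - x, y - z⟫ + η * ⟪u, y - z⟫ ≤ 0 := by
    have h1 : p - y = -((y - x) + η • u) := by rw [hp]; abel
    have h2 : z - y = -(y - z) := by abel
    rw [h1, h2, inner_neg_neg, inner_add_left, real_inner_smul_left] at h0
    linarith
  set c : ℝ := 1 / (2 * η) with hc
  have hcpos : 0 < c := by rw [hc]; positivity
  have hc2 : c * η = 1 / 2 := by rw [hc]; field_simp
  have hkey : ⟪u, y - z⟫ + 2 * c * ⟪y - x, y - z⟫ ≤ 0 := by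
    have h1 : c * (⟪y - x, y - z⟫ + η * ⟪u, y - z⟫) ≤ 0 :=
      mul_nonpos_iff.mpr (Or.inl ⟨hcpos.le, hPs⟩)
    have h2 : c * (⟪y - x, y - z⟫ + η * ⟪u, y - z⟫)
        = c * ⟪y - x, y - z⟫ + (1 / 2) * ⟪u, y - z⟫ := by
      rw [mul_add, ← mul_assoc, hc2]
    linarith [h2 ▸ h1]
  -- smoothness bounds
  have hy := abs_le.mp (descent_bound φ φ' hdiff L' hLip x y)
  have hz := abs_le.mp (descent_bound φ φ' hdiff L' hLip x z)
  -- inner product expansion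
  have hsplit : ⟪y - z, φ' x - u⟫
      = ⟪φ' x, y - x⟫ - ⟪φ' x, z - x⟫ - ⟪u, y - z⟫ := by
    have e1 : ⟪y - z, φ' x - u⟫ = ⟪y - z, φ' x⟫ - ⟪y - z, u⟫ := inner_sub_right _ _ _
    have e2 : ⟪y - z, φ' x⟫ = ⟪φ' x, y - z⟫ := real_inner_comm _ _
    have e3 : ⟪y - z, u⟫ = ⟪u, y - z⟫ := real_inner_comm _ _
    have e4 : ⟪φ' x, y - z⟫ = ⟪φ' x, y - x⟫ - ⟪φ' x, z - x⟫ := by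
      rw [show (y : EuclideanSpace ℝ (Fin n)) - z = (y - x) - (z - x) by abel, inner_sub_right]
    linarith [e1, e2, e3, e4]
  -- norm identity
  have hnorm : ‖z - x‖ ^ 2 = ‖y - z‖ ^ 2 + ‖y - x‖ ^ 2 - 2 * ⟪y - x, y - z⟫ := by
    have h1 : (z : EuclideanSpace ℝ (Fin n)) - x = (y - x) - (y - z) := by abel
    rw [h1, norm_sub_sq_real, real_inner_comm]
    ring
  have hmain : (L' / 2 - c) * ‖y - x‖ ^ 2 + (L' / 2 + c) * ‖z - x‖ ^ 2
      - c * ‖y - z‖ ^ 2 - ⟪u, y - z⟫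
      ≥ L' / 2 * ‖y - x‖ ^ 2 + L' / 2 * ‖z - x‖ ^ 2 := by
    have h0' : c * (‖z - x‖ ^ 2
        - (‖y - z‖ ^ 2 + ‖y - x‖ ^ 2 - 2 * ⟪y - x, y - z⟫)) = 0 := by
      rw [hnorm]; ring
    nlinarith [hkey, h0']
  have hgoal : ⟪y - z, φ' x - u⟫ = ⟪φ' x, y - x⟫ - ⟪φ' x, z - x⟫ - ⟪u, y - z⟫ := hsplit
  rw [hgoal]
  linarith [hy.2, hz.1, hmain]
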